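/- Strong duality structure of entropic optimal transport (bimarginal case): the minimizer of ⟨C + ε log M, M⟩ over nonnegative N×N matrices M with row sums μ and column sums ν (μ, ν strictly positive probability vectors) has the form M_opt = diag(u) K diag(v) with K = exp(−C/ε) entrywise and strictly positive vectors u, v; equivalently, any M of this form that satisfies the marginal constraints is the unique optimal solution. -/

import Mathlib

open scoped BigOperators


open Filter Topology


lemma mul_log_core {x y : ℝ} (hx : 0 < x) (hy : 0 ≤ y) :
    x * Real.log x + (Real.log x + 1) * (y - x) ≤ y * Real.log y ∧
    (x * Real.log x + (Real.log x + 1) * (y - x) = y * Real.log y → y = x) := by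
  rcases hy.eq_or_lt with h0 | hy
  · subst h0
    constructor
    · simp; nlinarith
    · intro h; simp at h; nlinarith
  · have hxy : 0 < x / y := div_pos hx hy
    have h1 : Real.log (x / y) ≤ x / y - 1 := Real.log_le_sub_one_of_pos hxy
    have hl : Real.log (x / y) = Real.log x - Real.log y := Real.log_div hx.ne' hy.ne'
    constructor
    · have := mul_le_mul_of_nonneg_left h1 hy.le
      rw [hl] at this
      have hd : y * (x / y - 1) = x - y := by field_simp
      nlinarith [this]
    · intro heq
      by_contra hne
      have hne1 : x / y ≠ 1 := by
        intro h; apply hne; field_simp at h; linarith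
      have h2 : Real.log (x / y) < x / y - 1 := Real.log_lt_sub_one_of_pos hxy hne1
      rw [hl] at h2
      have := mul_lt_mul_of_pos_left h2 hy
      have hd : y * (x / y - 1) = x - y := by field_simp
      nlinarith

lemma key_ineq {ε : ℝ} (hε : 0 < ε) (c : ℝ) {x y : ℝ} (hx : 0 < x) (hy : 0 ≤ y) :
    x * (c + ε * Real.log x) + (c + ε * Real.log x + ε) * (y - x)
      ≤ y * (c + ε * Real.log y) ∧
    (x * (c + ε * Real.log x) + (c + ε * Real.log x + ε) * (y - x)
      = y * (c + ε * Real.log y) → y = x) := by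
  obtain ⟨h1, h2⟩ := mul_log_core hx hy
  constructor
  · nlinarith
  · intro h; apply h2; nlinarith

lemma unique_core {N : ℕ} (C : Matrix (Fin N) (Fin N) ℝ) {ε : ℝ} (hε : 0 < ε)
    (K : Matrix (Fin N) (Fin N) ℝ) (hK : ∀ i j, K i j = Real.exp (-(C i j) / ε))
    (μ ν : Fin N → ℝ)
    (u v : Fin N → ℝ) (hu : ∀ i, 0 < u i) (hv : ∀ j, 0 < v j)
    (hr : ∀ i, ∑ j, u i * K i j * v j = μ i) (hc : ∀ j, ∑ i, u i * K i j * v j = ν j)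
    (M' : Matrix (Fin N) (Fin N) ℝ) (hM' : ∀ i j, 0 ≤ M' i j)
    (hr' : ∀ i, ∑ j, M' i j = μ i) (hc' : ∀ j, ∑ i, M' i j = ν j) :
    ((∑ i, ∑ j, (u i * K i j * v j) * (C i j + ε * Real.log (u i * K i j * v j)))
      ≤ ∑ i, ∑ j, M' i j * (C i j + ε * Real.log (M' i j))) ∧
    ((∑ i, ∑ j, M' i j * (C i j + ε * Real.log (M' i j)))
        = (∑ i, ∑ j, (u i * K i j * v j) * (C i j + ε * Real.log (u i * K i j * v j))) →
      M' = fun i j => u i * K i j * v j) := by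
  have hKpos : ∀ i j, 0 < K i j := fun i j => by rw [hK]; exact Real.exp_pos _
  set Mo : Matrix (Fin N) (Fin N) ℝ := fun i j => u i * K i j * v j with hMo
  have hMop : ∀ i j, 0 < Mo i j := fun i j => by
    exact mul_pos (mul_pos (hu i) (hKpos i j)) (hv j)
  -- linear coefficient identity
  have hL : ∀ i j, C i j + ε * Real.log (Mo i j) + ε
      = ε * Real.log (u i) + ε * Real.log (v j) + ε := by
    intro i j
    have hlog : Real.log (Mo i j)
        = Real.log (u i) + (-(C i j) / ε) + Real.log (v j) := by
      show Real.log (u i * K i j * v j) = _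
      rw [Real.log_mul (mul_pos (hu i) (hKpos i j)).ne' (hv j).ne',
        Real.log_mul (hu i).ne' (hKpos i j).ne', hK, Real.log_exp]
    rw [hlog]
    field_simp
    ring
  -- the gap function
  set gap : Fin N → Fin N → ℝ := fun i j =>
    M' i j * (C i j + ε * Real.log (M' i j))
      - Mo i j * (C i j + ε * Real.log (Mo i j))
      - (C i j + ε * Real.log (Mo i j) + ε) * (M' i j - Mo i j) with hgapdef
  have hgap0 : ∀ i j, 0 ≤ gap i j := by
    intro i j
    have := (key_ineq hε (C i j) (hMop i j) (hM' i j)).1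
    simp only [hgapdef]
    linarith
  have hgapeq : ∀ i j, gap i j = 0 → M' i j = Mo i j := by
    intro i j h
    refine (key_ineq hε (C i j) (hMop i j) (hM' i j)).2 ?_
    simp only [hgapdef] at h
    linarith
  -- linear part vanishes
  have hlin : ∑ i, ∑ j, (C i j + ε * Real.log (Mo i j) + ε) * (M' i j - Mo i j) = 0 := by
    have hrow : ∀ i, ∑ j, (M' i j - Mo i j) = 0 := fun i => by
      rw [Finset.sum_sub_distrib, hr' i, hr i, sub_self]
    have hcol : ∀ j, ∑ i, (M' i j - Mo i j) = 0 := fun j => by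
      rw [Finset.sum_sub_distrib, hc' j, hc j, sub_self]
    have step1 : ∀ i, ∑ j, (C i j + ε * Real.log (Mo i j) + ε) * (M' i j - Mo i j)
        = ∑ j, (ε * Real.log (v j) + ε) * (M' i j - Mo i j) := by
      intro i
      have : ∀ j, (C i j + ε * Real.log (Mo i j) + ε) * (M' i j - Mo i j)
          = ε * Real.log (u i) * (M' i j - Mo i j)
            + (ε * Real.log (v j) + ε) * (M' i j - Mo i j) := by
        intro j; rw [hL i j]; ring
      rw [Finset.sum_congr rfl fun j _ => this j, Finset.sum_add_distrib,
        ← Finset.mul_sum, hrow i, mul_zero, zero_add]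
    rw [Finset.sum_congr rfl fun i _ => step1 i, Finset.sum_comm]
    refine Finset.sum_eq_zero fun j _ => ?_
    rw [← Finset.mul_sum, hcol j, mul_zero]
  have hsum : ∑ i, ∑ j, gap i j
      = (∑ i, ∑ j, M' i j * (C i j + ε * Real.log (M' i j)))
        - ∑ i, ∑ j, Mo i j * (C i j + ε * Real.log (Mo i j)) := by
    simp only [hgapdef, Finset.sum_sub_distrib]
    rw [hlin]
    ring
  have hnn : 0 ≤ ∑ i, ∑ j, gap i j :=
    Finset.sum_nonneg fun i _ => Finset.sum_nonneg fun j _ => hgap0 i j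
  constructor
  · linarith [hsum, hnn]
  · intro heq
    have hz : ∑ i, ∑ j, gap i j = 0 := by rw [hsum, heq, sub_self]
    have hinner : ∀ i ∈ Finset.univ, ∑ j, gap i j = 0 :=
      (Finset.sum_eq_zero_iff_of_nonneg fun i _ =>
        Finset.sum_nonneg fun j _ => hgap0 i j).mp hz
    funext i j
    have := (Finset.sum_eq_zero_iff_of_nonneg fun j _ => hgap0 i j).mp
      (hinner i (Finset.mem_univ i)) j (Finset.mem_univ j)
    exact hgapeq i j this


lemma exists_min {N : ℕ} (C : (Fin N → Fin N → ℝ)) (ε : ℝ)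
    (μ ν : Fin N → ℝ) (hμ : ∀ i, 0 < μ i) (hν : ∀ j, 0 < ν j)
    (hμs : ∑ i, μ i = 1) (hνs : ∑ j, ν j = 1) :
    ∃ M : (Fin N → Fin N → ℝ),
      ((∀ i j, 0 ≤ M i j) ∧ (∀ i, ∑ j, M i j = μ i) ∧ (∀ j, ∑ i, M i j = ν j)) ∧
      ∀ M' : (Fin N → Fin N → ℝ),
        ((∀ i j, 0 ≤ M' i j) ∧ (∀ i, ∑ j, M' i j = μ i) ∧ (∀ j, ∑ i, M' i j = ν j)) →
        (∑ i, ∑ j, M i j * (C i j + ε * Real.log (M i j)))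
          ≤ ∑ i, ∑ j, M' i j * (C i j + ε * Real.log (M' i j)) := by
  classical
  set S : Set ((Fin N → Fin N → ℝ)) :=
    {M | (∀ i j, 0 ≤ M i j) ∧ (∀ i, ∑ j, M i j = μ i) ∧ (∀ j, ∑ i, M i j = ν j)} with hSdef
  set f : (Fin N → Fin N → ℝ) → ℝ :=
    fun M => ∑ i, ∑ j, M i j * (C i j + ε * Real.log (M i j)) with hfdef
  have hcontAp : ∀ (i j : Fin N), Continuous fun M : (Fin N → Fin N → ℝ) => M i j :=
    fun i j => (continuous_apply j).comp (continuous_apply i)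
  -- S nonempty
  have hne : S.Nonempty := by
    refine ⟨fun i j => μ i * ν j, fun i j => (mul_pos (hμ i) (hν j)).le, ?_, ?_⟩
    · intro i; rw [← Finset.mul_sum, hνs, mul_one]
    · intro j; rw [← Finset.sum_mul, hμs, one_mul]
  -- S closed
  have hclosed : IsClosed S := by
    have h1 : IsClosed {M : (Fin N → Fin N → ℝ) | ∀ i j, 0 ≤ M i j} := by
      have : {M : (Fin N → Fin N → ℝ) | ∀ i j, 0 ≤ M i j}
          = ⋂ i, ⋂ j, {M : (Fin N → Fin N → ℝ) | 0 ≤ M i j} := by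
        ext M; simp [Set.mem_iInter]
      rw [this]
      exact isClosed_iInter fun i => isClosed_iInter fun j =>
        isClosed_le continuous_const (hcontAp i j)
    have h2 : IsClosed {M : (Fin N → Fin N → ℝ) | ∀ i, ∑ j, M i j = μ i} := by
      have : {M : (Fin N → Fin N → ℝ) | ∀ i, ∑ j, M i j = μ i}
          = ⋂ i, {M : (Fin N → Fin N → ℝ) | ∑ j, M i j = μ i} := by
        ext M; simp [Set.mem_iInter]
      rw [this]
      exact isClosed_iInter fun i =>
        isClosed_eq (continuous_finset_sum _ fun j _ => hcontAp i j) continuous_const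
    have h3 : IsClosed {M : (Fin N → Fin N → ℝ) | ∀ j, ∑ i, M i j = ν j} := by
      have : {M : (Fin N → Fin N → ℝ) | ∀ j, ∑ i, M i j = ν j}
          = ⋂ j, {M : (Fin N → Fin N → ℝ) | ∑ i, M i j = ν j} := by
        ext M; simp [Set.mem_iInter]
      rw [this]
      exact isClosed_iInter fun j =>
        isClosed_eq (continuous_finset_sum _ fun i _ => hcontAp i j) continuous_const
    have : S = {M : (Fin N → Fin N → ℝ) | ∀ i j, 0 ≤ M i j}
        ∩ ({M | ∀ i, ∑ j, M i j = μ i} ∩ {M | ∀ j, ∑ i, M i j = ν j}) := by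
      ext M; simp only [hSdef, Set.mem_setOf_eq, Set.mem_inter_iff]; try tauto
    rw [this]
    exact h1.inter (h2.inter h3)
  -- S bounded
  have hbdd : Bornology.IsBounded S := by
    refine (Metric.isBounded_closedBall (x := (0 : (Fin N → Fin N → ℝ))) (r := 1)).subset ?_
    intro M hM
    rw [Metric.mem_closedBall, dist_zero_right]
    refine (pi_norm_le_iff_of_nonneg zero_le_one).mpr fun i => ?_
    refine (pi_norm_le_iff_of_nonneg zero_le_one).mpr fun j => ?_
    obtain ⟨hpos, hrow, _⟩ := hM
    have hub : M i j ≤ μ i := by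
      rw [← hrow i]
      exact Finset.single_le_sum (fun j' _ => hpos i j') (Finset.mem_univ j)
    have hub2 : μ i ≤ 1 := by
      rw [← hμs]
      exact Finset.single_le_sum (fun i' _ => (hμ i').le) (Finset.mem_univ i)
    rw [Real.norm_eq_abs, abs_le]
    constructor <;> [linarith [hpos i j]; linarith]
  have hcpt : IsCompact S := Metric.isCompact_of_isClosed_isBounded hclosed hbdd
  -- f continuous
  have hf : Continuous f := by
    have : f = fun M => ∑ i, ∑ j,
        (M i j * C i j + ε * (M i j * Real.log (M i j))) := by
      funext M
      refine Finset.sum_congr rfl fun i _ => Finset.sum_congr rfl fun j _ => ?_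
      ring
    rw [this]
    refine continuous_finset_sum _ fun i _ => continuous_finset_sum _ fun j _ => ?_
    exact ((hcontAp i j).mul continuous_const).add
      (continuous_const.mul (Real.continuous_mul_log.comp (hcontAp i j)))
  obtain ⟨M, hMS, hMmin⟩ := hcpt.exists_isMinOn hne hf.continuousOn
  exact ⟨M, hMS, fun M' hM' => hMmin hM'⟩

lemma phi_hasDerivAt {ε c m d : ℝ} (hm : 0 < m) :
    HasDerivAt (fun t : ℝ => (m + t * d) * (c + ε * Real.log (m + t * d)))
      (d * (c + ε * Real.log m + ε)) 0 := by
  have h1 : HasDerivAt (fun t : ℝ => m + t * d) d 0 := by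
    simpa using ((hasDerivAt_id (0:ℝ)).mul_const d).const_add m
  have h2' : HasDerivAt (fun x : ℝ => x * (c + ε * Real.log x))
      (1 * (c + ε * Real.log m) + m * (ε * m⁻¹)) ((fun t : ℝ => m + t * d) 0) := by
    have hlog : HasDerivAt Real.log m⁻¹ m := Real.hasDerivAt_log hm.ne'
    simpa using (hasDerivAt_id m).fun_mul ((hlog.const_mul ε).const_add c)
  have h3 := h2'.comp 0 h1
  have hv : (1 * (c + ε * Real.log m) + m * (ε * m⁻¹)) * d
      = d * (c + ε * Real.log m + ε) := by field_simp
  rw [hv] at h3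
  exact h3

lemma min_pos {N : ℕ} (C : Fin N → Fin N → ℝ) {ε : ℝ} (hε : 0 < ε)
    (μ ν : Fin N → ℝ) (hμ : ∀ i, 0 < μ i) (hν : ∀ j, 0 < ν j)
    (hμs : ∑ i, μ i = 1) (hνs : ∑ j, ν j = 1)
    (M : Fin N → Fin N → ℝ) (hpos : ∀ i j, 0 ≤ M i j)
    (hrow : ∀ i, ∑ j, M i j = μ i) (hcol : ∀ j, ∑ i, M i j = ν j)
    (hmin : ∀ M' : Fin N → Fin N → ℝ,
      ((∀ i j, 0 ≤ M' i j) ∧ (∀ i, ∑ j, M' i j = μ i) ∧ (∀ j, ∑ i, M' i j = ν j)) →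
      (∑ i, ∑ j, M i j * (C i j + ε * Real.log (M i j)))
        ≤ ∑ i, ∑ j, M' i j * (C i j + ε * Real.log (M' i j))) :
    ∀ i j, 0 < M i j := by
  classical
  by_contra hcon
  push_neg at hcon
  obtain ⟨i0, j0, h0⟩ := hcon
  have hM0 : M i0 j0 = 0 := le_antisymm h0 (hpos i0 j0)
  set d : Fin N → Fin N → ℝ := fun i j => μ i * ν j - M i j with hd
  have hdsum_row : ∀ i, ∑ j, d i j = 0 := by
    intro i
    simp only [hd]
    rw [Finset.sum_sub_distrib, ← Finset.mul_sum, hνs, hrow i, mul_one, sub_self]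
  have hdsum_col : ∀ j, ∑ i, d i j = 0 := by
    intro j
    simp only [hd]
    rw [Finset.sum_sub_distrib, ← Finset.sum_mul, hμs, hcol j, one_mul, sub_self]
  set s : Fin N × Fin N → ℝ → ℝ := fun p t =>
    ((M p.1 p.2 + t * d p.1 p.2) * (C p.1 p.2 + ε * Real.log (M p.1 p.2 + t * d p.1 p.2))
      - M p.1 p.2 * (C p.1 p.2 + ε * Real.log (M p.1 p.2))) / t with hs
  -- zero entries: slope tends to -∞
  have hatBot : ∀ p : Fin N × Fin N, M p.1 p.2 = 0 →
      Tendsto (s p) (𝓝[>] (0:ℝ)) atBot := by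
    intro p hp
    set dp : ℝ := d p.1 p.2 with hdp
    have hdpos : 0 < dp := by
      simp only [hdp, hd, hp, sub_zero]
      exact mul_pos (hμ p.1) (hν p.2)
    have heq : ∀ᶠ t in 𝓝[>] (0:ℝ), ε * dp * Real.log t
        + (dp * C p.1 p.2 + ε * dp * Real.log dp) = s p t := by
      filter_upwards [self_mem_nhdsWithin] with t ht
      have ht : (0:ℝ) < t := ht
      simp only [hs, hp, zero_add, zero_mul, sub_zero]
      rw [Real.log_mul ht.ne' hdpos.ne']
      field_simp
      ring
    have htend : Tendsto (fun t : ℝ => ε * dp * Real.log t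
        + (dp * C p.1 p.2 + ε * dp * Real.log dp)) (𝓝[>] (0:ℝ)) atBot := by
      apply tendsto_atBot_add_const_right
      exact Tendsto.const_mul_atBot (mul_pos hε hdpos) Real.tendsto_log_nhdsGT_zero
    exact htend.congr' heq
  -- all entries: slope eventually bounded above
  have hbound : ∀ p : Fin N × Fin N, ∃ A : ℝ, ∀ᶠ t in 𝓝[>] (0:ℝ), s p t ≤ A := by
    intro p
    rcases (hpos p.1 p.2).eq_or_lt with hp | hp
    · exact ⟨0, ((hatBot p hp.symm).eventually (eventually_le_atBot 0))⟩
    · set L : ℝ := d p.1 p.2 * (C p.1 p.2 + ε * Real.log (M p.1 p.2) + ε) with hL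
      have hder := phi_hasDerivAt (ε := ε) (c := C p.1 p.2) (d := d p.1 p.2) hp
      rw [hasDerivAt_iff_tendsto_slope] at hder
      have hslope : ∀ t : ℝ, slope (fun t : ℝ => (M p.1 p.2 + t * d p.1 p.2) *
          (C p.1 p.2 + ε * Real.log (M p.1 p.2 + t * d p.1 p.2))) 0 t = s p t := by
        intro t
        simp [slope_def_field, hs]
      have htend : Tendsto (s p) (𝓝[>] (0:ℝ)) (𝓝 L) := by
        have := hder.mono_left (nhdsWithin_mono _ (fun x hx => ne_of_gt hx))
        exact Tendsto.congr hslope this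
      exact ⟨L + 1, htend.eventually (eventually_le_nhds (lt_add_one L))⟩
  choose A hA using hbound
  set p0 : Fin N × Fin N := (i0, j0) with hp0
  set T : ℝ := ∑ p ∈ Finset.univ.erase p0, A p with hT
  have E1 : ∀ᶠ t in 𝓝[>] (0:ℝ), ∀ p ∈ Finset.univ.erase p0, s p t ≤ A p :=
    (Finset.eventually_all _).mpr fun p _ => hA p
  have E2 : ∀ᶠ t in 𝓝[>] (0:ℝ), s p0 t ≤ -T - 1 :=
    (hatBot p0 hM0).eventually (eventually_le_atBot _)
  have E3 : ∀ᶠ t in 𝓝[>] (0:ℝ), t ∈ Set.Ioc (0:ℝ) 1 :=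
    Ioc_mem_nhdsGT_of_mem ⟨le_refl 0, zero_lt_one⟩
  obtain ⟨t, h1, h2, h3⟩ := (E1.and (E2.and E3)).exists
  obtain ⟨ht0, ht1⟩ := h3
  -- the perturbed matrix
  set Mt : Fin N → Fin N → ℝ := fun i j => M i j + t * d i j with hMt
  have hMtfeas : (∀ i j, 0 ≤ Mt i j) ∧ (∀ i, ∑ j, Mt i j = μ i) ∧
      (∀ j, ∑ i, Mt i j = ν j) := by
    refine ⟨fun i j => ?_, fun i => ?_, fun j => ?_⟩
    · simp only [hMt, hd]
      nlinarith [hpos i j, mul_pos (hμ i) (hν j)]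
    · simp only [hMt]
      rw [Finset.sum_add_distrib, ← Finset.mul_sum, hdsum_row i, mul_zero, add_zero, hrow i]
    · simp only [hMt]
      rw [Finset.sum_add_distrib, ← Finset.mul_sum, hdsum_col j, mul_zero, add_zero, hcol j]
  have hfM := hmin Mt hMtfeas
  -- compute the difference
  have hdiff : t * ∑ p : Fin N × Fin N, s p t
      = (∑ i, ∑ j, Mt i j * (C i j + ε * Real.log (Mt i j)))
        - (∑ i, ∑ j, M i j * (C i j + ε * Real.log (M i j))) := by
    have h4 : ∀ p : Fin N × Fin N, t * s p t
        = Mt p.1 p.2 * (C p.1 p.2 + ε * Real.log (Mt p.1 p.2))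
          - M p.1 p.2 * (C p.1 p.2 + ε * Real.log (M p.1 p.2)) := by
      intro p
      simp only [hs, hMt]
      rw [mul_comm t, div_mul_cancel₀ _ ht0.ne']
    rw [Finset.mul_sum, Finset.sum_congr rfl fun p _ => h4 p, Fintype.sum_prod_type]
    simp [Finset.sum_sub_distrib]
  have hsumneg : ∑ p : Fin N × Fin N, s p t ≤ -1 := by
    rw [← Finset.add_sum_erase _ _ (Finset.mem_univ p0)]
    have : ∑ p ∈ Finset.univ.erase p0, s p t ≤ T :=
      Finset.sum_le_sum fun p hp => h1 p hp
    linarith [h2]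
  have hlt : t * ∑ p : Fin N × Fin N, s p t < 0 := by
    calc t * ∑ p : Fin N × Fin N, s p t ≤ t * (-1) :=
          mul_le_mul_of_nonneg_left hsumneg ht0.le
      _ < 0 := by linarith
  rw [hdiff] at hlt
  linarith

lemma stationary {N : ℕ} (C : Fin N → Fin N → ℝ) {ε : ℝ} (hε : 0 < ε)
    (μ ν : Fin N → ℝ)
    (M : Fin N → Fin N → ℝ) (hpos : ∀ i j, 0 < M i j)
    (hrow : ∀ i, ∑ j, M i j = μ i) (hcol : ∀ j, ∑ i, M i j = ν j)
    (hmin : ∀ M' : Fin N → Fin N → ℝ,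
      ((∀ i j, 0 ≤ M' i j) ∧ (∀ i, ∑ j, M' i j = μ i) ∧ (∀ j, ∑ i, M' i j = ν j)) →
      (∑ i, ∑ j, M i j * (C i j + ε * Real.log (M i j)))
        ≤ ∑ i, ∑ j, M' i j * (C i j + ε * Real.log (M' i j)))
    (D : Fin N → Fin N → ℝ) (hDr : ∀ i, ∑ j, D i j = 0) (hDc : ∀ j, ∑ i, D i j = 0) :
    ∑ p : Fin N × Fin N, D p.1 p.2 * (C p.1 p.2 + ε * Real.log (M p.1 p.2) + ε) = 0 := by
  classical
  set g : ℝ → ℝ := fun t => ∑ p : Fin N × Fin N,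
    (M p.1 p.2 + t * D p.1 p.2) * (C p.1 p.2 + ε * Real.log (M p.1 p.2 + t * D p.1 p.2))
    with hg
  have hder : HasDerivAt g (∑ p : Fin N × Fin N,
      D p.1 p.2 * (C p.1 p.2 + ε * Real.log (M p.1 p.2) + ε)) 0 :=
    HasDerivAt.fun_sum fun p _ => phi_hasDerivAt (hpos p.1 p.2)
  have hloc : IsLocalMin g 0 := by
    have hev : ∀ᶠ t in 𝓝 (0:ℝ), ∀ p ∈ (Finset.univ : Finset (Fin N × Fin N)),
        0 < M p.1 p.2 + t * D p.1 p.2 := by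
      refine (Finset.eventually_all _).mpr fun p _ => ?_
      have hc : Tendsto (fun t : ℝ => M p.1 p.2 + t * D p.1 p.2) (𝓝 0)
          (𝓝 (M p.1 p.2 + 0 * D p.1 p.2)) :=
        (continuous_const.add (continuous_id.mul continuous_const)).tendsto 0
      rw [zero_mul, add_zero] at hc
      exact hc.eventually (eventually_gt_nhds (hpos p.1 p.2))
    filter_upwards [hev] with t ht
    have hg0 : g 0 = ∑ i, ∑ j, M i j * (C i j + ε * Real.log (M i j)) := by
      simp only [hg, zero_mul, add_zero]
      rw [Fintype.sum_prod_type]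
    have hgt : g t = ∑ i, ∑ j, (M i j + t * D i j) *
        (C i j + ε * Real.log (M i j + t * D i j)) := by
      simp only [hg]
      rw [Fintype.sum_prod_type]
    rw [hg0, hgt]
    refine hmin _ ⟨fun i j => (ht (i, j) (Finset.mem_univ _)).le, fun i => ?_, fun j => ?_⟩
    · rw [Finset.sum_add_distrib, ← Finset.mul_sum, hDr i, mul_zero, add_zero, hrow i]
    · rw [Finset.sum_add_distrib, ← Finset.mul_sum, hDc j, mul_zero, add_zero, hcol j]
  exact hloc.hasDerivAt_eq_zero hder

lemma quad {N : ℕ} (C : Fin N → Fin N → ℝ) {ε : ℝ} (hε : 0 < ε)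
    (μ ν : Fin N → ℝ)
    (M : Fin N → Fin N → ℝ) (hpos : ∀ i j, 0 < M i j)
    (hrow : ∀ i, ∑ j, M i j = μ i) (hcol : ∀ j, ∑ i, M i j = ν j)
    (hmin : ∀ M' : Fin N → Fin N → ℝ,
      ((∀ i j, 0 ≤ M' i j) ∧ (∀ i, ∑ j, M' i j = μ i) ∧ (∀ j, ∑ i, M' i j = ν j)) →
      (∑ i, ∑ j, M i j * (C i j + ε * Real.log (M i j)))
        ≤ ∑ i, ∑ j, M' i j * (C i j + ε * Real.log (M' i j)))
    (i i' j j' : Fin N) :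
    (C i j + ε * Real.log (M i j)) + (C i' j' + ε * Real.log (M i' j'))
      = (C i j' + ε * Real.log (M i j')) + (C i' j + ε * Real.log (M i' j)) := by
  classical
  set D : Fin N → Fin N → ℝ := fun a b =>
    (if a = i then (1:ℝ) else 0) * (if b = j then (1:ℝ) else 0)
    + (if a = i' then (1:ℝ) else 0) * (if b = j' then (1:ℝ) else 0)
    - (if a = i then (1:ℝ) else 0) * (if b = j' then (1:ℝ) else 0)
    - (if a = i' then (1:ℝ) else 0) * (if b = j then (1:ℝ) else 0) with hD
  have hDr : ∀ a, ∑ b, D a b = 0 := by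
    intro a
    simp only [hD]
    rw [Finset.sum_sub_distrib, Finset.sum_sub_distrib, Finset.sum_add_distrib,
      ← Finset.mul_sum, ← Finset.mul_sum, ← Finset.mul_sum, ← Finset.mul_sum]
    simp [Finset.sum_ite_eq']
  have hDc : ∀ b, ∑ a, D a b = 0 := by
    intro b
    simp only [hD]
    rw [Finset.sum_sub_distrib, Finset.sum_sub_distrib, Finset.sum_add_distrib,
      ← Finset.sum_mul, ← Finset.sum_mul, ← Finset.sum_mul, ← Finset.sum_mul]
    simp [Finset.sum_ite_eq']
  have hstat := stationary C hε μ ν M hpos hrow hcol hmin D hDr hDc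
  set ψ : Fin N → Fin N → ℝ := fun a b => C a b + ε * Real.log (M a b) + ε with hψ
  have hval : ∑ p : Fin N × Fin N, D p.1 p.2 * ψ p.1 p.2
      = ψ i j + ψ i' j' - ψ i j' - ψ i' j := by
    rw [Fintype.sum_prod_type]
    simp only [hD, sub_mul, add_mul, ite_mul, one_mul, zero_mul,
      Finset.sum_sub_distrib, Finset.sum_add_distrib, Finset.sum_ite_eq',
      Finset.mem_univ, if_true]
    simp [Finset.sum_ite_irrel, Finset.sum_ite_eq', Finset.sum_ite_eq]
  rw [hval] at hstat
  simp only [hψ] at hstat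
  linarith


/-- Strong duality structure of bimarginal entropic optimal
transport: the minimizer of `⟨C + ε log M, M⟩` over nonnegative matrices with
row sums `μ` and column sums `ν` has the form `M_opt = diag(u) K diag(v)` with
`K = exp(−C/ε)` and `u, v > 0`; equivalently, any `M` of this form satisfying
the marginal constraints is the unique optimal solution. -/
theorem entropic_ot_diag_scaling_optimality {N : ℕ} (hN : 0 < N)
    (C : Matrix (Fin N) (Fin N) ℝ) (ε : ℝ) (hε : 0 < ε)
    (K : Matrix (Fin N) (Fin N) ℝ)
    (hK : ∀ i j, K i j = Real.exp (-(C i j) / ε))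
    (μ ν : Fin N → ℝ) (hμ : ∀ i, 0 < μ i) (hν : ∀ j, 0 < ν j)
    (hμs : ∑ i, μ i = 1) (hνs : ∑ j, ν j = 1) :
    -- existence: there is an optimal solution of the scaled form
    (∃ u v : Fin N → ℝ, (∀ i, 0 < u i) ∧ (∀ j, 0 < v j) ∧
      (∀ i, ∑ j, u i * K i j * v j = μ i) ∧
      (∀ j, ∑ i, u i * K i j * v j = ν j) ∧
      ∀ M' : Matrix (Fin N) (Fin N) ℝ, (∀ i j, 0 ≤ M' i j) →
        (∀ i, ∑ j, M' i j = μ i) → (∀ j, ∑ i, M' i j = ν j) →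
        (∑ i, ∑ j, (u i * K i j * v j) *
            (C i j + ε * Real.log (u i * K i j * v j)))
          ≤ ∑ i, ∑ j, M' i j * (C i j + ε * Real.log (M' i j))) ∧
    -- uniqueness: any feasible matrix of the scaled form is the unique optimum
    (∀ u v : Fin N → ℝ, (∀ i, 0 < u i) → (∀ j, 0 < v j) →
      (∀ i, ∑ j, u i * K i j * v j = μ i) →
      (∀ j, ∑ i, u i * K i j * v j = ν j) →
      ∀ M' : Matrix (Fin N) (Fin N) ℝ, (∀ i j, 0 ≤ M' i j) →
        (∀ i, ∑ j, M' i j = μ i) → (∀ j, ∑ i, M' i j = ν j) →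
        ((∑ i, ∑ j, (u i * K i j * v j) *
            (C i j + ε * Real.log (u i * K i j * v j)))
          ≤ ∑ i, ∑ j, M' i j * (C i j + ε * Real.log (M' i j))) ∧
        ((∑ i, ∑ j, M' i j * (C i j + ε * Real.log (M' i j)))
            = (∑ i, ∑ j, (u i * K i j * v j) *
                (C i j + ε * Real.log (u i * K i j * v j))) →
          M' = fun i j => u i * K i j * v j)) := by
  classical
  obtain ⟨M, hMfeas, hMmin⟩ := exists_min C ε μ ν hμ hν hμs hνs
  obtain ⟨hMnn, hMrow, hMcol⟩ := hMfeas
  have hMpos : ∀ i j, 0 < M i j :=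
    min_pos C hε μ ν hμ hν hμs hνs M hMnn hMrow hMcol hMmin
  have hquad := quad C hε μ ν M hMpos hMrow hMcol hMmin
  refine ⟨?_, ?_⟩
  · -- existence
    set i0 : Fin N := ⟨0, hN⟩ with hi0
    set u : Fin N → ℝ := fun i => Real.exp ((C i i0 + ε * Real.log (M i i0)
        - (C i0 i0 + ε * Real.log (M i0 i0))) / ε) with hu
    set v : Fin N → ℝ := fun j => Real.exp ((C i0 j + ε * Real.log (M i0 j)) / ε) with hv
    have hupos : ∀ i, 0 < u i := fun i => Real.exp_pos _
    have hvpos : ∀ j, 0 < v j := fun j => Real.exp_pos _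
    have hprod : ∀ i j, u i * K i j * v j = M i j := by
      intro i j
      have hψ := hquad i i0 j i0
      rw [hK i j]
      simp only [hu, hv]
      rw [← Real.exp_add, ← Real.exp_add]
      have hlog : (C i i0 + ε * Real.log (M i i0) - (C i0 i0 + ε * Real.log (M i0 i0))) / ε
          + -C i j / ε + (C i0 j + ε * Real.log (M i0 j)) / ε = Real.log (M i j) := by
        field_simp
        linarith [hψ]
      rw [hlog, Real.exp_log (hMpos i j)]
    have hr : ∀ i, ∑ j, u i * K i j * v j = μ i := by
      intro i
      rw [Finset.sum_congr rfl fun j _ => hprod i j, hMrow i]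
    have hc : ∀ j, ∑ i, u i * K i j * v j = ν j := by
      intro j
      rw [Finset.sum_congr rfl fun i _ => hprod i j, hMcol j]
    exact ⟨u, v, hupos, hvpos, hr, hc, fun M' h1 h2 h3 =>
      (unique_core C hε K hK μ ν u v hupos hvpos hr hc M' h1 h2 h3).1⟩
  · -- uniqueness
    intro u v hupos hvpos hr hc M' h1 h2 h3
    exact unique_core C hε K hK μ ν u v hupos hvpos hr hc M' h1 h2 h3
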